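/- One-step descent bound (Lemma 2, deterministic version without delay): under the assumptions that F is L-smooth, h is convex, f̂(·, x_t, ξ_t) is μ-strongly convex and L̂-smooth with ∇f̂(x_t, x_t, ξ_t) = ∇f(x_t, ξ_t), and x_{t+1} = x_t + γ(x̂_t - x_t) with x̂_t the minimizer of h(x) + ρf̂(x, x_t, ξ_t) + (1-ρ)⟨y_t, x⟩ + (1-ρ)(μ/2)‖x - x_t‖² over convex X, then for every η > 0: U(x_{t+1}) - U(x_t) ≤ (γη/2)‖y_{t+1} - ∇F(x_t)‖² + γ(γL/2 + 2/η - μ)‖x̂_t - x_t‖², where U = F + h and y_{t+1} = (1-ρ)y_t + ρ∇f(x_t, ξ_t). -/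

import Mathlib

open Set Filter Topology InnerProductSpace

section Helpers

variable {n : ℕ}

private lemma hasDerivAt_line {f : EuclideanSpace ℝ (Fin n) → ℝ} {v : EuclideanSpace ℝ (Fin n)}
    (x d : EuclideanSpace ℝ (Fin n)) (t : ℝ)
    (hf : HasGradientAt f v (x + t • d)) :
    HasDerivAt (fun s : ℝ => f (x + s • d)) (inner ℝ v d) t := by
  have hc : HasDerivAt (fun s : ℝ => x + s • d) d t := by
    simpa using ((hasDerivAt_id t).smul_const d).const_add x
  have := hf.hasFDerivAt.comp_hasDerivAt t hc
  simp [InnerProductSpace.toDual_apply_apply] at this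
  exact this

private lemma norm_combo_sq (a b : EuclideanSpace ℝ (Fin n)) (t : ℝ) :
    ‖(1 - t) • a + t • b‖ ^ 2
      = (1 - t) * ‖a‖ ^ 2 + t * ‖b‖ ^ 2 - t * (1 - t) * ‖a - b‖ ^ 2 := by
  simp only [← real_inner_self_eq_norm_sq, inner_add_left, inner_add_right,
    inner_sub_left, inner_sub_right, real_inner_smul_left, real_inner_smul_right]
  rw [real_inner_comm b a]; ring

private lemma strong_combo {f : EuclideanSpace ℝ (Fin n) → ℝ} {μ : ℝ}
    (hf : ConvexOn ℝ Set.univ (fun x => f x - (μ / 2) * ‖x‖ ^ 2))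
    (a b : EuclideanSpace ℝ (Fin n)) {t : ℝ} (ht0 : 0 ≤ t) (ht1 : t ≤ 1) :
    f ((1 - t) • a + t • b)
      ≤ (1 - t) * f a + t * f b - (μ / 2) * t * (1 - t) * ‖a - b‖ ^ 2 := by
  have h := hf.2 (mem_univ a) (mem_univ b) (by linarith : (0:ℝ) ≤ 1 - t) ht0 (by ring)
  simp only [smul_eq_mul] at h
  rw [norm_combo_sq (n := n) a b t] at h
  linarith

private lemma grad_lower {f : EuclideanSpace ℝ (Fin n) → ℝ} {μ : ℝ}
    {x v : EuclideanSpace ℝ (Fin n)}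
    (hf : ConvexOn ℝ Set.univ (fun x => f x - (μ / 2) * ‖x‖ ^ 2))
    (hd : HasGradientAt f v x) (y : EuclideanSpace ℝ (Fin n)) :
    f x + inner ℝ v (y - x) + (μ / 2) * ‖y - x‖ ^ 2 ≤ f y := by
  set g : ℝ → ℝ := fun s => f (x + s • (y - x)) with hg
  have hder : HasDerivAt g (inner ℝ v (y - x)) 0 := by
    apply hasDerivAt_line x (y - x) 0
    simpa using hd
  have hslope : Tendsto (slope g 0) (𝓝[>] (0:ℝ)) (𝓝 ((inner ℝ v (y - x) : ℝ))) :=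
    (hasDerivAt_iff_tendsto_slope.mp hder).mono_left
      (nhdsWithin_mono 0 fun t ht => ne_of_gt ht)
  have hRHS : Tendsto (fun t : ℝ => f y - f x - (μ/2) * (1 - t) * ‖y - x‖^2) (𝓝[>] (0:ℝ))
      (𝓝 (f y - f x - (μ/2) * ‖y - x‖^2)) := by
    have hc : Continuous (fun t : ℝ => f y - f x - (μ/2) * (1 - t) * ‖y - x‖^2) :=
      continuous_const.sub ((continuous_const.mul (continuous_const.sub continuous_id)).mul
        continuous_const)
    have := (hc.tendsto 0).mono_left (nhdsWithin_le_nhds (s := Ioi (0:ℝ)))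
    simpa using this
  have hineq : (inner ℝ v (y - x) : ℝ) ≤ f y - f x - (μ/2) * ‖y - x‖^2 := by
    refine le_of_tendsto_of_tendsto hslope hRHS ?_
    filter_upwards [Ioc_mem_nhdsGT_of_mem (Set.mem_Ico.mpr ⟨le_refl 0, zero_lt_one⟩)] with t ht
    obtain ⟨ht0, ht1⟩ := ht
    have hcombo : x + t • (y - x) = (1 - t) • x + t • y := by module
    have hsc := strong_combo hf x y ht0.le ht1
    have hval : g t ≤ (1 - t) * f x + t * f y - (μ/2) * t * (1-t) * ‖x - y‖^2 := by
      rw [hg]; simpa [hcombo] using hsc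
    have hg0 : g 0 = f x := by simp [hg]
    have hsl : slope g 0 t = (g t - g 0) / t := by
      rw [slope_def_field]; simp
    rw [hsl, hg0, div_le_iff₀ ht0]
    rw [norm_sub_rev x y] at hval
    nlinarith [hval]
  linarith

private lemma descent_lemma {f : EuclideanSpace ℝ (Fin n) → ℝ}
    {gf : EuclideanSpace ℝ (Fin n) → EuclideanSpace ℝ (Fin n)} {L : ℝ}
    (hd : ∀ x, HasGradientAt f (gf x) x)
    (hL : ∀ a b, ‖gf a - gf b‖ ≤ L * ‖a - b‖) (x y : EuclideanSpace ℝ (Fin n)) :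
    f y ≤ f x + inner ℝ (gf x) (y - x) + (L / 2) * ‖y - x‖ ^ 2 := by
  set d := y - x with hdd
  set φ : ℝ → ℝ := fun t => f (x + t • d) - t * (inner ℝ (gf x) d : ℝ) - (L/2) * t^2 * ‖d‖^2
    with hφ
  have hder : ∀ t : ℝ, HasDerivAt φ
      ((inner ℝ (gf (x + t • d)) d : ℝ) - inner ℝ (gf x) d - L * t * ‖d‖^2) t := by
    intro t
    have h1 : HasDerivAt (fun s : ℝ => f (x + s • d)) (inner ℝ (gf (x + t • d)) d) t :=
      hasDerivAt_line x d t (hd _)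
    have h2 : HasDerivAt (fun s : ℝ => s * (inner ℝ (gf x) d : ℝ)) (inner ℝ (gf x) d) t := by
      simpa using (hasDerivAt_id t).mul_const (inner ℝ (gf x) d : ℝ)
    have h3 : HasDerivAt (fun s : ℝ => (L/2) * s^2 * ‖d‖^2) (L * t * ‖d‖^2) t := by
      have h3' := ((hasDerivAt_pow 2 t).const_mul (L/2)).mul_const (‖d‖^2)
      refine h3'.congr_deriv ?_
      push_cast; ring
    exact (h1.sub h2).sub h3
  have hmono : AntitoneOn φ (Icc (0:ℝ) 1) := by
    apply antitoneOn_of_deriv_nonpos (convex_Icc (0:ℝ) 1)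
    · exact fun t _ => (hder t).continuousAt.continuousWithinAt
    · exact fun t _ => (hder t).differentiableAt.differentiableWithinAt
    · intro t ht
      rw [interior_Icc] at ht
      rw [(hder t).deriv]
      have hip : (inner ℝ (gf (x + t • d)) d : ℝ) - inner ℝ (gf x) d
          = inner ℝ (gf (x + t • d) - gf x) d := (inner_sub_left _ _ _).symm
      have hb : (inner ℝ (gf (x + t • d) - gf x) d : ℝ) ≤ ‖gf (x + t • d) - gf x‖ * ‖d‖ :=
        real_inner_le_norm _ _
      have hLb : ‖gf (x + t • d) - gf x‖ ≤ L * ‖t • d‖ := by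
        have := hL (x + t • d) x
        simpa [add_sub_cancel_left] using this
      have hts : ‖t • d‖ = t * ‖d‖ := by
        rw [norm_smul, Real.norm_eq_abs, abs_of_pos ht.1]
      rw [hip]
      have hd0 : (0:ℝ) ≤ ‖d‖ := norm_nonneg _
      have h4 := mul_le_mul_of_nonneg_right hLb hd0
      rw [hts] at h4
      nlinarith [hb, h4]
  have h01 := hmono (Set.left_mem_Icc.mpr zero_le_one) (Set.right_mem_Icc.mpr zero_le_one)
    zero_le_one
  have hφ0 : φ 0 = f x := by simp [hφ]
  have hφ1 : φ 1 = f y - (inner ℝ (gf x) d : ℝ) - (L/2) * ‖d‖^2 := by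
    simp [hφ, hdd]
  rw [hφ0, hφ1] at h01
  linarith

end Helpers

set_option maxHeartbeats 2000000 in
theorem one_step_descent_bound
    {n : ℕ} (L Lhat μ ρ γ η : ℝ)
    (hμ : 0 < μ) (hρ0 : 0 < ρ) (hρ1 : ρ ≤ 1)
    (hγ0 : 0 < γ) (hγ1 : γ ≤ 1) (hη : 0 < η)
    (F h fhat : EuclideanSpace ℝ (Fin n) → ℝ)
    (gF gfhat : EuclideanSpace ℝ (Fin n) → EuclideanSpace ℝ (Fin n))
    (hFdiff : ∀ x, HasGradientAt F (gF x) x)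
    (hFLip : ∀ x y, ‖gF x - gF y‖ ≤ L * ‖x - y‖)
    (hconv : ConvexOn ℝ Set.univ h)
    (hfdiff : ∀ x, HasGradientAt fhat (gfhat x) x)
    (hfsc : ConvexOn ℝ Set.univ (fun x => fhat x - (μ / 2) * ‖x‖ ^ 2))
    (hfLip : ∀ x y, ‖gfhat x - gfhat y‖ ≤ Lhat * ‖x - y‖)
    (X : Set (EuclideanSpace ℝ (Fin n))) (hX : Convex ℝ X)
    (xt xhat yt g : EuclideanSpace ℝ (Fin n))
    (hxtX : xt ∈ X) (hxhatX : xhat ∈ X)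
    (htangent : gfhat xt = g)
    (hmin : ∀ u ∈ X,
      h xhat + ρ * fhat xhat + (1 - ρ) * inner ℝ yt xhat
          + (1 - ρ) * (μ / 2) * ‖xhat - xt‖ ^ 2 ≤
        h u + ρ * fhat u + (1 - ρ) * inner ℝ yt u
          + (1 - ρ) * (μ / 2) * ‖u - xt‖ ^ 2) :
    (F (xt + γ • (xhat - xt)) + h (xt + γ • (xhat - xt))) - (F xt + h xt) ≤
      (γ * η / 2) * ‖((1 - ρ) • yt + ρ • g) - gF xt‖ ^ 2 +
        γ * (γ * L / 2 + 2 / η - μ) * ‖xhat - xt‖ ^ 2 := by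
  set d := xhat - xt with hd
  set w := (1 - ρ) • yt + ρ • g with hw
  have hc0 : (0:ℝ) ≤ ‖d‖^2 := sq_nonneg _
  -- Step A : descent lemma for F
  have hγd : (xt + γ • d) - xt = γ • d := add_sub_cancel_left xt _
  have hF : F (xt + γ • d) ≤ F xt + γ * (inner ℝ (gF xt) d : ℝ) + (L/2) * γ^2 * ‖d‖^2 := by
    have hdl := descent_lemma hFdiff hFLip xt (xt + γ • d)
    rw [hγd] at hdl
    have h1 : (inner ℝ (gF xt) (γ • d) : ℝ) = γ * inner ℝ (gF xt) d := real_inner_smul_right _ _ _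
    have h2 : ‖γ • d‖^2 = γ^2 * ‖d‖^2 := by
      rw [norm_smul, Real.norm_eq_abs, mul_pow, sq_abs]
    rw [h1, h2] at hdl
    linarith
  -- Step B : convexity of h
  have hcomb : xt + γ • d = (1 - γ) • xt + γ • xhat := by rw [hd]; module
  have hh : h (xt + γ • d) ≤ (1 - γ) * h xt + γ * h xhat := by
    rw [hcomb]
    have := hconv.2 (mem_univ xt) (mem_univ xhat) (by linarith : (0:ℝ) ≤ 1 - γ) hγ0.le
      (by ring)
    simpa using this
  -- Step C : strong minimizer inequality
  have hkey : (μ/2) * ‖d‖^2 ≤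
      (h xt + ρ * fhat xt + (1 - ρ) * (inner ℝ yt xt : ℝ))
        - (h xhat + ρ * fhat xhat + (1 - ρ) * (inner ℝ yt xhat : ℝ)
            + (1 - ρ) * (μ/2) * ‖d‖^2) := by
    have key : ∀ t : ℝ, t ∈ Ioc (0:ℝ) 1 → (μ/2) * (1 - t) * ‖d‖^2 ≤
        (h xt + ρ * fhat xt + (1 - ρ) * (inner ℝ yt xt : ℝ))
          - (h xhat + ρ * fhat xhat + (1 - ρ) * (inner ℝ yt xhat : ℝ)
              + (1 - ρ) * (μ/2) * ‖d‖^2) := by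
      intro t ht
      obtain ⟨ht0, ht1⟩ := ht
      set u := (1 - t) • xhat + t • xt with hu
      have huX : u ∈ X := hX hxhatX hxtX (by linarith) ht0.le (by ring)
      have hm := hmin u huX
      have hhu : h u ≤ (1 - t) * h xhat + t * h xt := by
        have := hconv.2 (mem_univ xhat) (mem_univ xt) (by linarith : (0:ℝ) ≤ 1 - t) ht0.le
          (by ring)
        simpa using this
      have hfu := strong_combo hfsc xhat xt ht0.le ht1
      have hfuρ := mul_le_mul_of_nonneg_left hfu hρ0.le
      have hiu : (inner ℝ yt u : ℝ) = (1 - t) * inner ℝ yt xhat + t * inner ℝ yt xt := by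
        rw [hu, inner_add_right, real_inner_smul_right, real_inner_smul_right]
      have hnu : ‖u - xt‖^2 = (1 - t)^2 * ‖xhat - xt‖^2 := by
        have he : u - xt = (1 - t) • (xhat - xt) := by rw [hu]; module
        rw [he, norm_smul, Real.norm_eq_abs, mul_pow, sq_abs]
      rw [hiu, hnu] at hm
      have hdn : ‖xhat - xt‖^2 = ‖d‖^2 := by rw [hd]
      rw [hdn] at hm hfuρ
      have hstep : t * ((μ/2) * (1 - t) * ‖d‖^2) ≤
          t * ((h xt + ρ * fhat xt + (1 - ρ) * (inner ℝ yt xt : ℝ))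
            - (h xhat + ρ * fhat xhat + (1 - ρ) * (inner ℝ yt xhat : ℝ)
                + (1 - ρ) * (μ/2) * ‖d‖^2)) := by
        nlinarith [hm, hhu, hfuρ]
      exact le_of_mul_le_mul_left hstep ht0
    have htend : Tendsto (fun t : ℝ => (μ/2) * (1 - t) * ‖d‖^2) (𝓝[>] (0:ℝ))
        (𝓝 ((μ/2) * ‖d‖^2)) := by
      have hc : Continuous (fun t : ℝ => (μ/2) * (1 - t) * ‖d‖^2) :=
        (continuous_const.mul (continuous_const.sub continuous_id)).mul continuous_const
      have := (hc.tendsto 0).mono_left (nhdsWithin_le_nhds (s := Ioi (0:ℝ)))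
      simpa using this
    refine le_of_tendsto htend ?_
    filter_upwards [Ioc_mem_nhdsGT_of_mem (Set.mem_Ico.mpr ⟨le_refl 0, zero_lt_one⟩)] with t ht
    exact key t ht
  -- Step D : strong convexity of fhat at xt
  have hfg : fhat xt + (inner ℝ g d : ℝ) + (μ/2) * ‖d‖^2 ≤ fhat xhat := by
    have := grad_lower hfsc (hfdiff xt) xhat
    rw [htangent] at this
    rw [hd]
    exact this
  have hfgρ := mul_le_mul_of_nonneg_left hfg hρ0.le
  -- Step E : Young's inequality
  have hGW : (inner ℝ (gF xt - w) d : ℝ) = inner ℝ (gF xt) d - inner ℝ w d := inner_sub_left _ _ _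
  have hyoung : (inner ℝ (gF xt) d : ℝ) - inner ℝ w d
      ≤ (η/2) * ‖w - gF xt‖^2 + (1/(2*η)) * ‖d‖^2 := by
    rw [← hGW]
    have h1 : (inner ℝ (gF xt - w) d : ℝ) ≤ ‖gF xt - w‖ * ‖d‖ := real_inner_le_norm _ _
    have h2 : ‖gF xt - w‖ = ‖w - gF xt‖ := norm_sub_rev _ _
    have h3 : ‖w - gF xt‖ * ‖d‖ ≤ (η/2) * ‖w - gF xt‖^2 + (1/(2*η)) * ‖d‖^2 := by
      have hnn : (0:ℝ) ≤ (η * ‖w - gF xt‖ - ‖d‖)^2 := sq_nonneg _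
      have hid : (η/2) * ‖w - gF xt‖^2 + (1/(2*η)) * ‖d‖^2 - ‖w - gF xt‖ * ‖d‖
          = (η * ‖w - gF xt‖ - ‖d‖)^2 / (2*η) := by field_simp; ring
      have hq := div_nonneg hnn (by linarith : (0:ℝ) ≤ 2*η)
      rw [← hid] at hq
      linarith
    rw [h2] at h1
    linarith
  have hyoungγ := mul_le_mul_of_nonneg_left hyoung hγ0.le
  -- inner ℝ product expansions
  have hwd : (inner ℝ w d : ℝ) = (1 - ρ) * inner ℝ yt d + ρ * inner ℝ g d := by
    rw [hw, inner_add_left, real_inner_smul_left, real_inner_smul_left]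
  have hytd : (inner ℝ yt d : ℝ) = inner ℝ yt xhat - inner ℝ yt xt := by
    rw [hd, inner_sub_right]
  -- combine
  have hhd : h xhat - h xt ≤ -(inner ℝ w d : ℝ) - μ * ‖d‖^2 := by
    rw [hwd, hytd]
    nlinarith [hkey, hfgρ]
  have hhdγ := mul_le_mul_of_nonneg_left hhd hγ0.le
  have hηle : 1/(2*η) ≤ 2/η := by
    rw [div_le_div_iff₀ (by linarith) hη]
    nlinarith
  have hη2 : γ * ((1/(2*η)) * ‖d‖^2) ≤ γ * ((2/η) * ‖d‖^2) := by
    apply mul_le_mul_of_nonneg_left _ hγ0.le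
    exact mul_le_mul_of_nonneg_right hηle hc0
  nlinarith [hF, hh, hhdγ, hyoungγ, hη2]
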